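/- If C = (1+2v²)C₁ ⊕ (2v+2v²)C₂ ⊕ (v+2v²)C₃ is a cyclic code of length n over R with generator polynomials f₁, f₂, f₃ of C₁, C₂, C₃ (monic divisors of xⁿ−1 in Z₃[x]), then C^⊥ = ⟨(1+2v²)h₁* + (2v+2v²)h₂* + (v+2v²)h₃*⟩ as an ideal of R[x]/(xⁿ−1), where hᵢ(x) = (xⁿ−1)/fᵢ(x) and hᵢ*(x) = x^{deg hᵢ} hᵢ(x^{−1}) is the reciprocal polynomial of hᵢ; moreover |C^⊥| = 3^{deg f₁ + deg f₂ + deg f₃}. The analogous statement holds for negacyclic codes with xⁿ−1 replaced by xⁿ+1. -/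

import Mathlib

/-- The ring `R = Z₃ + vZ₃ + v²Z₃ = Z₃[v]/(v³ - v)`, with elements written
`a + v*b + v²*c` for `a b c : ZMod 3` (stored as the three coordinates). -/
@[ext]
structure R3 : Type where
  a : ZMod 3
  b : ZMod 3
  c : ZMod 3
  deriving DecidableEq

namespace R3

instance : Zero R3 := ⟨⟨0, 0, 0⟩⟩
instance : One R3 := ⟨⟨1, 0, 0⟩⟩
instance : Add R3 := ⟨fun x y => ⟨x.a + y.a, x.b + y.b, x.c + y.c⟩⟩
instance : Neg R3 := ⟨fun x => ⟨-x.a, -x.b, -x.c⟩⟩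
/-- Multiplication induced by `v³ = v` :
`(a+vb+v²c)(a'+vb'+v²c') = aa' + v(ab'+a'b+bc'+b'c) + v²(ac'+a'c+bb'+cc')`. -/
instance : Mul R3 := ⟨fun x y =>
  ⟨x.a * y.a,
   x.a * y.b + x.b * y.a + x.b * y.c + x.c * y.b,
   x.a * y.c + x.c * y.a + x.b * y.b + x.c * y.c⟩⟩

@[simp] lemma zero_a : (0 : R3).a = 0 := rfl
@[simp] lemma zero_b : (0 : R3).b = 0 := rfl
@[simp] lemma zero_c : (0 : R3).c = 0 := rfl
@[simp] lemma one_a : (1 : R3).a = 1 := rfl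
@[simp] lemma one_b : (1 : R3).b = 0 := rfl
@[simp] lemma one_c : (1 : R3).c = 0 := rfl
@[simp] lemma add_a (x y : R3) : (x + y).a = x.a + y.a := rfl
@[simp] lemma add_b (x y : R3) : (x + y).b = x.b + y.b := rfl
@[simp] lemma add_c (x y : R3) : (x + y).c = x.c + y.c := rfl
@[simp] lemma neg_a (x : R3) : (-x).a = -x.a := rfl
@[simp] lemma neg_b (x : R3) : (-x).b = -x.b := rfl
@[simp] lemma neg_c (x : R3) : (-x).c = -x.c := rfl
@[simp] lemma mul_a (x y : R3) : (x * y).a = x.a * y.a := rfl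
@[simp] lemma mul_b (x y : R3) :
    (x * y).b = x.a * y.b + x.b * y.a + x.b * y.c + x.c * y.b := rfl
@[simp] lemma mul_c (x y : R3) :
    (x * y).c = x.a * y.c + x.c * y.a + x.b * y.b + x.c * y.c := rfl

private lemma thm_add_assoc (x y z : R3) : x + y + z = x + (y + z) := by ext <;> simp <;> ring
private lemma thm_zero_add (x : R3) : 0 + x = x := by ext <;> simp
private lemma thm_add_zero (x : R3) : x + 0 = x := by ext <;> simp
private lemma thm_add_comm (x y : R3) : x + y = y + x := by ext <;> simp <;> ring
private lemma thm_mul_assoc (x y z : R3) : x * y * z = x * (y * z) := by ext <;> simp <;> ring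
private lemma thm_one_mul (x : R3) : 1 * x = x := by ext <;> simp
private lemma thm_mul_one (x : R3) : x * 1 = x := by ext <;> simp
private lemma thm_left_distrib (x y z : R3) : x * (y + z) = x * y + x * z := by ext <;> simp <;> ring
private lemma thm_right_distrib (x y z : R3) : (x + y) * z = x * z + y * z := by ext <;> simp <;> ring
private lemma thm_mul_comm (x y : R3) : x * y = y * x := by ext <;> simp <;> ring
private lemma thm_zero_mul (x : R3) : 0 * x = 0 := by ext <;> simp
private lemma thm_mul_zero (x : R3) : x * 0 = 0 := by ext <;> simp
private lemma thm_neg_add_cancel (x : R3) : -x + x = 0 := by ext <;> simp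

instance : CommRing R3 where
  nsmul m x := ⟨m • x.a, m • x.b, m • x.c⟩
  nsmul_zero x := by ext <;> exact zero_smul ℕ _
  nsmul_succ m x := by ext <;> exact succ_nsmul _ _
  zsmul m x := ⟨m • x.a, m • x.b, m • x.c⟩
  zsmul_zero' x := by ext <;> exact zero_smul ℤ _
  zsmul_succ' m x := by ext <;> exact SubNegMonoid.zsmul_succ' _ _
  zsmul_neg' m x := by ext <;> exact SubNegMonoid.zsmul_neg' _ _
  add_assoc := thm_add_assoc
  zero_add := thm_zero_add
  add_zero := thm_add_zero
  add_comm := thm_add_comm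
  mul_assoc := thm_mul_assoc
  one_mul := thm_one_mul
  mul_one := thm_mul_one
  left_distrib := thm_left_distrib
  right_distrib := thm_right_distrib
  mul_comm := thm_mul_comm
  zero_mul := thm_zero_mul
  mul_zero := thm_mul_zero
  neg_add_cancel := thm_neg_add_cancel

/-- The element `v` of `R = Z₃[v]/(v³-v)`. -/
def v : R3 := ⟨0, 1, 0⟩

/-- The natural inclusion `Z₃ → R`. -/
def iota : ZMod 3 →+* R3 where
  toFun t := ⟨t, 0, 0⟩
  map_one' := by ext <;> simp
  map_mul' x y := by ext <;> simp
  map_zero' := by ext <;> simp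
  map_add' x y := by ext <;> simp

instance : Algebra (ZMod 3) R3 := iota.toAlgebra

end R3

open R3 in
/-- The Gray map `φ : R → Z₃³`, `φ(a+vb+v²c) = (a, a+b+c, a+2b+c)`. -/
def gray (r : R3) : ZMod 3 × ZMod 3 × ZMod 3 :=
  (r.a, r.a + r.b + r.c, r.a + 2 * r.b + r.c)

/-- The Gray map extended blockwise to `φ : R^n → Z₃^{3n}`, where `Z₃^{3n}` is
identified with `Z₃^n × Z₃^n × Z₃^n` via the three length-`n` blocks. -/
def grayV {n : ℕ} (r : Fin n → R3) :
    (Fin n → ZMod 3) × (Fin n → ZMod 3) × (Fin n → ZMod 3) :=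
  (fun i => (r i).a,
   fun i => (r i).a + (r i).b + (r i).c,
   fun i => (r i).a + 2 * (r i).b + (r i).c)

/-- Hamming weight on `Z₃^{3n} = Z₃^n × Z₃^n × Z₃^n`. -/
def wtH {n : ℕ} (x : (Fin n → ZMod 3) × (Fin n → ZMod 3) × (Fin n → ZMod 3)) : ℕ :=
  hammingNorm x.1 + hammingNorm x.2.1 + hammingNorm x.2.2

/-- The Lee weight of an element of `R`: the Hamming weight of its Gray image. -/
def wtLee (r : R3) : ℕ :=
  (if r.a ≠ 0 then 1 else 0) + (if r.a + r.b + r.c ≠ 0 then 1 else 0) +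
    (if r.a + 2 * r.b + r.c ≠ 0 then 1 else 0)

/-- The Lee weight on `R^n`, extended additively. -/
def wtLeeV {n : ℕ} (x : Fin n → R3) : ℕ := ∑ i, wtLee (x i)

/-- The cyclic shift `σ(c₀,…,c_{n-1}) = (c_{n-1},c₀,…,c_{n-2})`. -/
def cyc {α : Type*} {n : ℕ} [NeZero n] (c : Fin n → α) : Fin n → α :=
  fun i => c (i - 1)

/-- The negacyclic shift `η(c₀,…,c_{n-1}) = (-c_{n-1},c₀,…,c_{n-2})`. -/
def nega {α : Type*} [Neg α] {n : ℕ} [NeZero n] (c : Fin n → α) : Fin n → α :=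
  fun i => if i = 0 then -c (i - 1) else c (i - 1)

/-- The `λ`-constacyclic shift `(c₀,…,c_{n-1}) ↦ (λc_{n-1},c₀,…,c_{n-2})`. -/
def consta {α : Type*} [Mul α] {n : ℕ} [NeZero n] (lam : α) (c : Fin n → α) : Fin n → α :=
  fun i => if i = 0 then lam * c (i - 1) else c (i - 1)

open Fin.NatCast in
/-- The quasi-cyclic shift `τ_{s,l}` of block length `l` on vectors of length `n = s*l`,
moving the last block of `l` coordinates to the front; equivalently, the cyclic shift
by `l` positions. -/
def shiftBy {α : Type*} {n : ℕ} [NeZero n] (l : ℕ) (c : Fin n → α) : Fin n → α :=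
  fun i => c (i - (l : Fin n))

/-- Apply a map to each of the three blocks of `Z₃^{3n} = Z₃^n × Z₃^n × Z₃^n`. -/
def blockMap {n : ℕ} (f : (Fin n → ZMod 3) → (Fin n → ZMod 3))
    (x : (Fin n → ZMod 3) × (Fin n → ZMod 3) × (Fin n → ZMod 3)) :
    (Fin n → ZMod 3) × (Fin n → ZMod 3) × (Fin n → ZMod 3) :=
  (f x.1, f x.2.1, f x.2.2)

/-- The Euclidean dual of a linear code over `R`. -/
def dualR {n : ℕ} (C : Submodule R3 (Fin n → R3)) : Submodule R3 (Fin n → R3) where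
  carrier := {x | ∀ y ∈ C, ∑ i, x i * y i = 0}
  add_mem' := by
    intro p q hp hq y hy
    simp only [Set.mem_setOf_eq] at *
    simp [Pi.add_apply, add_mul, Finset.sum_add_distrib, hp y hy, hq y hy]
  zero_mem' := by intro y hy; simp
  smul_mem' := by
    intro r p hp y hy
    simp only [Set.mem_setOf_eq] at *
    simp [Pi.smul_apply, smul_eq_mul, mul_assoc, ← Finset.mul_sum, hp y hy]

/-- The Euclidean dual of a ternary linear code. -/
def dualZ {n : ℕ} (C : Submodule (ZMod 3) (Fin n → ZMod 3)) :
    Submodule (ZMod 3) (Fin n → ZMod 3) where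
  carrier := {x | ∀ y ∈ C, ∑ i, x i * y i = 0}
  add_mem' := by
    intro p q hp hq y hy
    simp only [Set.mem_setOf_eq] at *
    simp [Pi.add_apply, add_mul, Finset.sum_add_distrib, hp y hy, hq y hy]
  zero_mem' := by intro y hy; simp
  smul_mem' := by
    intro r p hp y hy
    simp only [Set.mem_setOf_eq] at *
    simp [Pi.smul_apply, smul_eq_mul, mul_assoc, ← Finset.mul_sum, hp y hy]

/-- The Euclidean inner product on `Z₃^{3n} = Z₃^n × Z₃^n × Z₃^n`. -/
def inner3 {n : ℕ} (x y : (Fin n → ZMod 3) × (Fin n → ZMod 3) × (Fin n → ZMod 3)) : ZMod 3 :=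
  ∑ i, x.1 i * y.1 i + ∑ i, x.2.1 i * y.2.1 i + ∑ i, x.2.2 i * y.2.2 i

/-- The Euclidean dual (as a set) of a subset of `Z₃^{3n}`. -/
def dual3Set {n : ℕ} (S : Set ((Fin n → ZMod 3) × (Fin n → ZMod 3) × (Fin n → ZMod 3))) :
    Set ((Fin n → ZMod 3) × (Fin n → ZMod 3) × (Fin n → ZMod 3)) :=
  {x | ∀ y ∈ S, inner3 x y = 0}

/-- The first associated ternary code `C₁ = {a : ∃ b c, a+vb+v²c ∈ C}`. -/
def assoc1 {n : ℕ} (C : Set (Fin n → R3)) : Set (Fin n → ZMod 3) :=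
  {x | ∃ r ∈ C, ∀ i, x i = (r i).a}

/-- The second associated ternary code `C₂ = {a+b+c : a+vb+v²c ∈ C}`. -/
def assoc2 {n : ℕ} (C : Set (Fin n → R3)) : Set (Fin n → ZMod 3) :=
  {x | ∃ r ∈ C, ∀ i, x i = (r i).a + (r i).b + (r i).c}

/-- The third associated ternary code `C₃ = {a+2b+c : a+vb+v²c ∈ C}`. -/
def assoc3 {n : ℕ} (C : Set (Fin n → R3)) : Set (Fin n → ZMod 3) :=
  {x | ∃ r ∈ C, ∀ i, x i = (r i).a + 2 * (r i).b + (r i).c}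

/-- The idempotent `e₁ = 1 + 2v²` of `R`. -/
noncomputable def e1 : R3 := 1 + 2 * R3.v ^ 2
/-- The idempotent `e₂ = 2v + 2v²` of `R`. -/
noncomputable def e2 : R3 := 2 * R3.v + 2 * R3.v ^ 2
/-- The idempotent `e₃ = v + 2v²` of `R`. -/
noncomputable def e3 : R3 := R3.v + 2 * R3.v ^ 2

/-- Coordinatewise inclusion `Z₃^n → R^n`. -/
def emb {n : ℕ} (x : Fin n → ZMod 3) : Fin n → R3 := fun i => R3.iota (x i)

/-- The code `(1+2v²)C₁ ⊕ (2v+2v²)C₂ ⊕ (v+2v²)C₃ ⊆ R^n` built from three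
ternary codes `C₁, C₂, C₃ ⊆ Z₃^n`. -/
def tri {n : ℕ} (C₁ C₂ C₃ : Set (Fin n → ZMod 3)) : Set (Fin n → R3) :=
  {w | ∃ x ∈ C₁, ∃ y ∈ C₂, ∃ z ∈ C₃, w = e1 • emb x + e2 • emb y + e3 • emb z}

open Polynomial in
/-- The polynomial representation `(c₀,…,c_{n-1}) ↦ c₀ + c₁x + … + c_{n-1}x^{n-1}`
of a vector over `Z₃`. -/
noncomputable def toPolyZ {n : ℕ} (c : Fin n → ZMod 3) : Polynomial (ZMod 3) :=
  ∑ i : Fin n, Polynomial.C (c i) * Polynomial.X ^ (i : ℕ)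

open Polynomial in
/-- The polynomial representation of a vector over `R`. -/
noncomputable def toPolyR {n : ℕ} (c : Fin n → R3) : Polynomial R3 :=
  ∑ i : Fin n, Polynomial.C (c i) * Polynomial.X ^ (i : ℕ)

/-- The quotient map `Z₃[x] → Z₃[x]/(xⁿ - ε)`. -/
noncomputable def mkZ (n : ℕ) (ε : ZMod 3) :
    Polynomial (ZMod 3) →+*
      Polynomial (ZMod 3) ⧸ Ideal.span {Polynomial.X ^ n - Polynomial.C ε} :=
  Ideal.Quotient.mk _

/-- The quotient map `R[x] → R[x]/(xⁿ - ε)`. -/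
noncomputable def mkR (n : ℕ) (ε : R3) :
    Polynomial R3 →+* Polynomial R3 ⧸ Ideal.span {Polynomial.X ^ n - Polynomial.C ε} :=
  Ideal.Quotient.mk _

/-- `f` is the generator polynomial of the ternary cyclic (`ε = 1`) resp. negacyclic
(`ε = -1`) code `D` of length `n`: `f` is a monic divisor of `xⁿ - ε` and, under the
polynomial representation, `D` corresponds exactly to the ideal of `Z₃[x]/(xⁿ - ε)`
generated by `f`. -/
def IsGenPolyZ (n : ℕ) (ε : ZMod 3) (D : Set (Fin n → ZMod 3))
    (f : Polynomial (ZMod 3)) : Prop :=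
  f.Monic ∧ f ∣ (Polynomial.X ^ n - Polynomial.C ε) ∧
    {p | ∃ c ∈ D, p = mkZ n ε (toPolyZ c)} = ↑(Ideal.span {mkZ n ε f})

namespace S13
open Polynomial

variable {A : Type*} [CommRing A]

/-- generic polynomial representation of a vector -/
noncomputable def tp {m : ℕ} (c : Fin m → A) : A[X] :=
  ∑ i : Fin m, C (c i) * X ^ (i : ℕ)

lemma tp_coeff {m : ℕ} (c : Fin m → A) (k : ℕ) :
    (tp c).coeff k = if h : k < m then c ⟨k, h⟩ else 0 := by
  rw [tp, finset_sum_coeff]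
  simp only [coeff_C_mul, coeff_X_pow]
  split
  · next h =>
    rw [Finset.sum_eq_single (⟨k, h⟩ : Fin m)]
    · simp
    · intro b _ hb
      rw [if_neg, mul_zero]
      intro hkb
      exact hb (by ext; simp [hkb.symm])
    · simp
  · next h =>
    apply Finset.sum_eq_zero
    intro i _
    rw [if_neg, mul_zero]
    intro hki
    exact h (hki ▸ i.isLt)

lemma tp_degree {m : ℕ} (c : Fin m → A) : (tp c).degree < (m : ℕ) := by
  rw [degree_lt_iff_coeff_zero]
  intro k hk
  rw [tp_coeff]
  rw [dif_neg]
  exact fun h => absurd (Nat.cast_le.mp hk) (by omega)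

lemma tp_eq_self {m : ℕ} {r : A[X]} (h : r.degree < (m : ℕ)) :
    tp (fun i : Fin m => r.coeff i) = r := by
  ext k
  rw [tp_coeff]
  split
  · rfl
  · next hk =>
    exact (coeff_eq_zero_of_degree_lt (lt_of_lt_of_le h (by exact_mod_cast Nat.le_of_not_lt hk))).symm

lemma tp_single {m : ℕ} (i : Fin m) : tp (Pi.single i (1 : A)) = X ^ (i : ℕ) := by
  rw [tp, Finset.sum_eq_single i]
  · simp
  · intro b _ hb
    rw [Pi.single_eq_of_ne hb, map_zero, zero_mul]
  · simp

lemma tp_add {m : ℕ} (c d : Fin m → A) : tp (c + d) = tp c + tp d := by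
  simp only [tp, ← Finset.sum_add_distrib]
  exact Finset.sum_congr rfl fun i _ => by rw [Pi.add_apply, map_add, add_mul]

lemma tp_smul {m : ℕ} (s : A) (c : Fin m → A) : tp (s • c) = C s * tp c := by
  simp only [tp, Finset.mul_sum]
  exact Finset.sum_congr rfl fun i _ => by
    rw [Pi.smul_apply, smul_eq_mul, map_mul, mul_assoc]

lemma tp_sub {m : ℕ} (c d : Fin m → A) : tp (c - d) = tp c - tp d := by
  simp only [tp, ← Finset.sum_sub_distrib]
  exact Finset.sum_congr rfl fun i _ => by rw [Pi.sub_apply, map_sub, sub_mul]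

lemma tp_eq_zero {m : ℕ} {c : Fin m → A} (h : tp c = 0) : c = 0 := by
  funext i
  have := tp_coeff c i
  rw [h, coeff_zero, dif_pos i.isLt] at this
  simpa using this.symm

section Quot

variable [Nontrivial A] (n : ℕ) [NeZero n] (a : A)

local notation "M" => (X ^ n - C a : A[X])
local notation "mq" => Ideal.Quotient.mk (Ideal.span {(X ^ n - C a : A[X])})

lemma M_monic : (M).Monic := monic_X_pow_sub_C a (NeZero.ne n)

lemma M_degree : (M).degree = (n : ℕ) := degree_X_pow_sub_C (Nat.pos_of_ne_zero (NeZero.ne n)) a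

/-- the basic linear map `c ↦ mk (tp c)` -/
noncomputable def ell : (Fin n → A) →ₗ[A] (A[X] ⧸ Ideal.span {(X ^ n - C a : A[X])}) where
  toFun c := mq (tp c)
  map_add' c d := by rw [tp_add, map_add]
  map_smul' s c := by
    dsimp only [RingHom.id_apply]
    rw [tp_smul, ← smul_eq_C_mul]
    rfl

lemma ell_apply (c : Fin n → A) : ell n a c = mq (tp c) := rfl

lemma ell_injective : Function.Injective (ell n a) := by
  intro c d h
  have h2 : mq (tp c - tp d) = 0 := by
    rw [map_sub, sub_eq_zero]; exact h
  rw [Ideal.Quotient.eq_zero_iff_mem, Ideal.mem_span_singleton] at h2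
  have hdeg : (tp c - tp d).degree < (M).degree := by
    rw [M_degree]
    exact lt_of_le_of_lt (degree_sub_le _ _) (max_lt (tp_degree c) (tp_degree d))
  have h3 : tp c - tp d = 0 := by
    have hm := (modByMonic_eq_self_iff (M_monic n a)).mpr hdeg
    rw [← hm, (modByMonic_eq_zero_iff_dvd (M_monic n a)).mpr h2]
  have h4 : tp (c - d) = 0 := by rw [tp_sub, h3]
  have := tp_eq_zero h4
  exact sub_eq_zero.mp (by funext i; exact congrFun this i)

lemma ell_mk_eq (p : A[X]) : mq (p %ₘ M) = mq p := by
  rw [Ideal.Quotient.mk_eq_mk_iff_sub_mem, Ideal.mem_span_singleton]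
  have h := modByMonic_add_div p M
  exact ⟨-(p /ₘ M), by linear_combination h⟩

lemma ell_surjective : Function.Surjective (ell n a) := by
  intro z
  obtain ⟨p, rfl⟩ := Ideal.Quotient.mk_surjective z
  refine ⟨fun i => (p %ₘ M).coeff i, ?_⟩
  rw [ell_apply, tp_eq_self, ell_mk_eq]
  rw [← M_degree n a]
  exact degree_modByMonic_lt p (M_monic n a)

/-- the linear equivalence between vectors and the quotient ring -/
noncomputable def ellE : (Fin n → A) ≃ₗ[A] (A[X] ⧸ Ideal.span {(X ^ n - C a : A[X])}) :=
  LinearEquiv.ofBijective (ell n a) ⟨ell_injective n a, ell_surjective n a⟩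

lemma ellE_apply (c : Fin n → A) : ellE n a c = mq (tp c) := rfl

lemma ellE_symm_mk_tp (c : Fin n → A) : (ellE n a).symm (mq (tp c)) = c :=
  (ellE n a).symm_apply_apply c

lemma mk_tp_symm (z : A[X] ⧸ Ideal.span {(X ^ n - C a : A[X])}) :
    mq (tp ((ellE n a).symm z)) = z :=
  (ellE n a).apply_symm_apply z

lemma ellE_symm_eq_iff {z} {c : Fin n → A} : (ellE n a).symm z = c ↔ z = mq (tp c) := by
  rw [LinearEquiv.symm_apply_eq]; rfl

end Quot

/-- inner product -/
def inn {m : ℕ} (c d : Fin m → A) : A := ∑ i, c i * d i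

lemma inn_smul_smul {m : ℕ} (b s : A) (c d : Fin m → A) :
    inn (b • c) (s • d) = b * s * inn c d := by
  rw [inn, inn, Finset.mul_sum]
  exact Finset.sum_congr rfl fun i _ => by
    rw [Pi.smul_apply, Pi.smul_apply, smul_eq_mul, smul_eq_mul]; ring

lemma inn_single_right {m : ℕ} (c : Fin m → A) (j : Fin m) :
    inn c (Pi.single j 1) = c j := by
  rw [inn, Finset.sum_eq_single j]
  · rw [Pi.single_eq_same, mul_one]
  · intro b _ hb; rw [Pi.single_eq_of_ne hb, mul_zero]
  · simp

section Pair

variable [Nontrivial A] (n : ℕ) [NeZero n] (a : A)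

local notation "mq" => Ideal.Quotient.mk (Ideal.span {(X ^ n - C a : A[X])})

/-- class of X -/
noncomputable def xq : A[X] ⧸ Ideal.span {(X ^ n - C a : A[X])} := mq X

lemma xq_def : xq n a = mq X := rfl

/-- inverse of the class of X (when a² = 1) -/
noncomputable def uq : A[X] ⧸ Ideal.span {(X ^ n - C a : A[X])} := mq (C a * X ^ (n - 1))

lemma uq_def : uq n a = mq (C a * X ^ (n - 1)) := rfl

lemma smul_mq (s : A) (z : A[X] ⧸ Ideal.span {(X ^ n - C a : A[X])}) :
    s • z = mq (C s) * z := by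
  obtain ⟨p, rfl⟩ := Ideal.Quotient.mk_surjective z
  have h : s • (mq p) = mq (s • p) := rfl
  rw [h, smul_eq_C_mul, map_mul]

lemma xq_pow_n : (xq n a) ^ n = mq (C a) := by
  have h : mq (X ^ n - C a) = 0 :=
    Ideal.Quotient.eq_zero_iff_mem.mpr (Ideal.mem_span_singleton_self _)
  rw [map_sub, sub_eq_zero, map_pow] at h
  rw [xq_def]
  exact h

variable (ha : a * a = 1)

include ha in
lemma one_smul_xq : a • (xq n a) ^ n = 1 := by
  rw [xq_pow_n, smul_mq, ← map_mul, ← C_mul, ha, C_1, map_one]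

include ha in
lemma uq_mul_xq : uq n a * xq n a = 1 := by
  have hn : n - 1 + 1 = n := Nat.succ_pred_eq_of_pos (Nat.pos_of_ne_zero (NeZero.ne n))
  rw [uq_def, xq_def, ← map_mul, mul_assoc, ← pow_succ, hn, map_mul, map_pow, ← xq_def,
    xq_pow_n, ← map_mul, ← C_mul, ha, C_1, map_one]

include ha in
lemma xq_pow_mul_uq_pow (s t : ℕ) : (xq n a) ^ (s + t) * (uq n a) ^ s = (xq n a) ^ t := by
  induction s with
  | zero => simp
  | succ k ih =>
    have e : k + 1 + t = (k + t) + 1 := by omega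
    rw [e, pow_succ, pow_succ, mul_mul_mul_comm, ih, mul_comm (xq n a) (uq n a),
      uq_mul_xq n a ha, mul_one]

include ha in
lemma uq_pow_eq {j : ℕ} (hj : j ≤ n) : (uq n a) ^ j = a • (xq n a) ^ (n - j) := by
  have h1 : (1 : A[X] ⧸ Ideal.span {(X ^ n - C a : A[X])}) = a • (xq n a) ^ n :=
    (one_smul_xq n a ha).symm
  calc (uq n a) ^ j = (a • (xq n a) ^ n) * (uq n a) ^ j := by rw [← h1, one_mul]
    _ = a • ((xq n a) ^ (j + (n - j)) * (uq n a) ^ j) := by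
        rw [smul_mul_assoc, Nat.add_sub_cancel' hj]
    _ = a • (xq n a) ^ (n - j) := by rw [xq_pow_mul_uq_pow n a ha]

include ha in
lemma uq_pow_n : (uq n a) ^ n = mq (C a) := by
  rw [uq_pow_eq n a ha (le_refl n), Nat.sub_self, pow_zero, smul_mq, mul_one]

lemma pow_reduce {z : A[X] ⧸ Ideal.span {(X ^ n - C a : A[X])}} (hz : z ^ n = mq (C a)) :
    ∀ (k r : ℕ), z ^ (n * k + r) = a ^ k • z ^ r := by
  intro k
  induction k with
  | zero => intro r; simp
  | succ k ih =>
    intro r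
    have : n * (k + 1) + r = (n * k + r) + n := by ring
    rw [this, pow_add, ih, hz, smul_mul_assoc, mul_comm, ← smul_mq, smul_smul, ← pow_succ]

lemma es_xq_pow {i : ℕ} (h : i < n) :
    (ellE n a).symm ((xq n a) ^ i) = Pi.single (⟨i, h⟩ : Fin n) 1 := by
  rw [LinearEquiv.symm_apply_eq, ellE_apply, tp_single, xq_def, ← map_pow]

include ha in
lemma M1_core {i j : ℕ} (hi : i < n) (hj : j < n) :
    inn ((ellE n a).symm ((xq n a) ^ i)) ((ellE n a).symm ((xq n a) ^ j))
      = (ellE n a).symm ((xq n a) ^ i * (uq n a) ^ j) 0 := by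
  have hn : 0 < n := Nat.pos_of_ne_zero (NeZero.ne n)
  rw [es_xq_pow n a hi, es_xq_pow n a hj, inn_single_right,
    uq_pow_eq n a ha (le_of_lt hj), mul_smul_comm, ← pow_add]
  have hL : ((Pi.single (⟨i, hi⟩ : Fin n) (1 : A) : Fin n → A)) ⟨j, hj⟩ = if j = i then 1 else 0 := by
    simp [Pi.single_apply, Fin.ext_iff]
  rw [hL]
  rcases eq_or_ne i j with rfl | hij
  · rw [if_pos rfl, Nat.add_sub_cancel' (le_of_lt hj), one_smul_xq n a ha]
    have h0 := es_xq_pow n a hn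
    rw [pow_zero] at h0
    rw [h0]
    have : ((Pi.single (⟨0, hn⟩ : Fin n) (1 : A) : Fin n → A)) 0 = 1 := by
      simp [Pi.single_apply, Fin.ext_iff]
    rw [this]
  · rw [if_neg (Ne.symm hij)]
    rcases lt_or_gt_of_ne hij with hlt | hgt
    · have hk : i + (n - j) < n := by omega
      rw [map_smul, Pi.smul_apply, es_xq_pow n a hk, smul_eq_mul]
      have h1 : ((Pi.single (⟨i + (n - j), hk⟩ : Fin n) (1 : A) : Fin n → A)) 0 = 0 := by
        simp only [Pi.single_apply, Fin.ext_iff, Fin.val_zero]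
        rw [if_neg]
        omega
      rw [h1, mul_zero]
    · have e : i + (n - j) = n * 1 + (i - j) := by omega
      have hk : i - j < n := by omega
      rw [e, pow_reduce n a (xq_pow_n n a) 1 (i - j), map_smul, map_smul,
        Pi.smul_apply, Pi.smul_apply, es_xq_pow n a hk, smul_eq_mul, smul_eq_mul]
      have h1 : ((Pi.single (⟨i - j, hk⟩ : Fin n) (1 : A) : Fin n → A)) 0 = 0 := by
        simp only [Pi.single_apply, Fin.ext_iff, Fin.val_zero]
        rw [if_neg]
        omega
      rw [h1, mul_zero, mul_zero]

include ha in
lemma M1 (i j : ℕ) :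
    inn ((ellE n a).symm ((xq n a) ^ i)) ((ellE n a).symm ((xq n a) ^ j))
      = (ellE n a).symm ((xq n a) ^ i * (uq n a) ^ j) 0 := by
  have hn : 0 < n := Nat.pos_of_ne_zero (NeZero.ne n)
  conv_lhs => rw [← Nat.div_add_mod i n, ← Nat.div_add_mod j n]
  conv_rhs => rw [← Nat.div_add_mod i n, ← Nat.div_add_mod j n]
  rw [pow_reduce n a (xq_pow_n n a), pow_reduce n a (xq_pow_n n a),
    pow_reduce n a (uq_pow_n n a ha), map_smul, map_smul, inn_smul_smul,
    smul_mul_smul_comm, map_smul, Pi.smul_apply, smul_eq_mul,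
    M1_core n a ha (Nat.mod_lt i hn) (Nat.mod_lt j hn)]

lemma inn_add_left {m : ℕ} (c d e : Fin m → A) : inn (c + d) e = inn c e + inn d e := by
  rw [inn, inn, inn, ← Finset.sum_add_distrib]
  exact Finset.sum_congr rfl fun i _ => by rw [Pi.add_apply, add_mul]

lemma inn_add_right {m : ℕ} (c d e : Fin m → A) : inn c (d + e) = inn c d + inn c e := by
  rw [inn, inn, inn, ← Finset.sum_add_distrib]
  exact Finset.sum_congr rfl fun i _ => by rw [Pi.add_apply, mul_add]

lemma mq_monomial (i : ℕ) (b : A) : mq (monomial i b) = b • (xq n a) ^ i := by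
  rw [← C_mul_X_pow_eq_monomial, map_mul, map_pow, ← xq_def, ← smul_mq]

lemma aeval_uq_monomial (j : ℕ) (s : A) :
    aeval (uq n a) (monomial j s) = s • (uq n a) ^ j := by
  have h : (algebraMap A (A[X] ⧸ Ideal.span {(X ^ n - C a : A[X])})) s = mq (C s) := rfl
  rw [aeval_monomial, h, ← smul_mq]

include ha in
lemma L1 (p q : A[X]) :
    inn ((ellE n a).symm (mq p)) ((ellE n a).symm (mq q))
      = (ellE n a).symm (mq p * aeval (uq n a) q) 0 := by
  induction p using Polynomial.induction_on' with
  | add f g hf hg =>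
    rw [map_add, map_add, inn_add_left, hf, hg, add_mul, map_add, Pi.add_apply]
  | monomial i b =>
    induction q using Polynomial.induction_on' with
    | add f g hf hg =>
      rw [map_add, map_add, inn_add_right, hf, hg, map_add, mul_add, map_add, Pi.add_apply]
    | monomial j s =>
      rw [mq_monomial, mq_monomial, aeval_uq_monomial, map_smul, map_smul, inn_smul_smul,
        smul_mul_smul_comm, map_smul, Pi.smul_apply, smul_eq_mul, M1 n a ha i j]

lemma reflect_sum (N : ℕ) (sfin : Finset ℕ) (g : ℕ → A[X]) :
    reflect N (∑ i ∈ sfin, g i) = ∑ i ∈ sfin, reflect N (g i) :=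
  map_sum (AddMonoidHom.mk' (fun p => reflect N p) (fun p q => reflect_add p q N)) g sfin

include ha in
lemma RL (f : A[X]) :
    (xq n a) ^ f.natDegree * aeval (uq n a) f = mq (reverse f) := by
  have key : ∀ i ∈ Finset.range (f.natDegree + 1),
      (xq n a) ^ f.natDegree * aeval (uq n a) (monomial i (f.coeff i))
        = mq (monomial (f.natDegree - i) (f.coeff i)) := by
    intro i hi
    rw [Finset.mem_range] at hi
    rw [aeval_uq_monomial, mul_smul_comm, mq_monomial]
    congr 1
    conv_lhs => rw [show f.natDegree = i + (f.natDegree - i) by omega]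
    exact xq_pow_mul_uq_pow n a ha i (f.natDegree - i)
  have hrev : reverse f
      = ∑ i ∈ Finset.range (f.natDegree + 1), monomial (f.natDegree - i) (f.coeff i) := by
    rw [reverse, congrArg (reflect f.natDegree) f.as_sum_range, reflect_sum]
    refine Finset.sum_congr rfl fun i hi => ?_
    rw [Finset.mem_range] at hi
    rw [← C_mul_X_pow_eq_monomial, reflect_C_mul_X_pow, revAt_le (by omega : i ≤ f.natDegree),
      C_mul_X_pow_eq_monomial]
  have h2 : aeval (uq n a) f
      = ∑ i ∈ Finset.range (f.natDegree + 1), aeval (uq n a) (monomial i (f.coeff i)) := by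
    conv_lhs => rw [congrArg (aeval (uq n a)) f.as_sum_range]
    rw [map_sum]
  calc (xq n a) ^ f.natDegree * aeval (uq n a) f
      = ∑ i ∈ Finset.range (f.natDegree + 1),
          (xq n a) ^ f.natDegree * aeval (uq n a) (monomial i (f.coeff i)) := by
        rw [h2, Finset.mul_sum]
    _ = ∑ i ∈ Finset.range (f.natDegree + 1), mq (monomial (f.natDegree - i) (f.coeff i)) :=
        Finset.sum_congr rfl key
    _ = mq (reverse f) := by rw [← map_sum, ← hrev]

lemma coord_shift (w : A[X] ⧸ Ideal.span {(X ^ n - C a : A[X])}) (j : Fin n) (ha : a * a = 1) :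
    (ellE n a).symm w j = (ellE n a).symm (w * (uq n a) ^ (j : ℕ)) 0 := by
  obtain ⟨p, rfl⟩ := Ideal.Quotient.mk_surjective w
  have h1 : (ellE n a).symm (mq p) j
      = inn ((ellE n a).symm (mq p)) ((ellE n a).symm (mq (X ^ (j : ℕ)))) := by
    rw [map_pow, ← xq_def, es_xq_pow n a j.isLt, inn_single_right]
  rw [h1, L1 n a ha p (X ^ (j : ℕ)), map_pow, aeval_X]

end Pair
section Ternary
open Polynomial

variable (n : ℕ) [NeZero n] (ε : ZMod 3)

local notation "mq" => Ideal.Quotient.mk (Ideal.span {(X ^ n - C ε : (ZMod 3)[X])})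

lemma mem_D_iff (D : Submodule (ZMod 3) (Fin n → ZMod 3)) (f : (ZMod 3)[X])
    (hD : {p | ∃ c ∈ D, p = mq (tp c)} = ↑(Ideal.span {mq f})) (c : Fin n → ZMod 3) :
    c ∈ D ↔ mq (tp c) ∈ Ideal.span {mq f} := by
  have hset : ∀ z, (∃ c ∈ D, z = mq (tp c)) ↔ z ∈ Ideal.span {mq f} := by
    intro z
    constructor
    · intro hz
      have h1 : z ∈ {p | ∃ c ∈ D, p = mq (tp c)} := hz
      rw [hD] at h1
      exact h1
    · intro hz
      have h1 : z ∈ {p | ∃ c ∈ D, p = mq (tp c)} := by rw [hD]; exact hz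
      exact h1
  constructor
  · intro hc
    exact (hset _).mp ⟨c, hc, rfl⟩
  · intro hz
    obtain ⟨c', hc', he⟩ := (hset _).mpr hz
    have : c = c' := ell_injective n ε he
    rw [this]
    exact hc'

variable (ha : ε * ε = 1)

include ha in
lemma L2 (D : Submodule (ZMod 3) (Fin n → ZMod 3)) (f : (ZMod 3)[X])
    (hD : {p | ∃ c ∈ D, p = mq (tp c)} = ↑(Ideal.span {mq f})) (c : Fin n → ZMod 3) :
    c ∈ dualZ D ↔ mq (tp c) * aeval (uq n ε) f = 0 := by
  constructor
  · intro hc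
    set z := mq (tp c) * aeval (uq n ε) f with hz
    have hz0 : ∀ j : Fin n, (ellE n ε).symm z j = 0 := by
      intro j
      rw [coord_shift n ε z j ha]
      have hL := L1 n ε ha (tp c) (f * X ^ (j : ℕ))
      have ha1 : aeval (uq n ε) (f * X ^ (j : ℕ))
          = aeval (uq n ε) f * (uq n ε) ^ (j : ℕ) := by
        rw [map_mul (aeval (uq n ε)), map_pow, aeval_X]
      rw [ha1, ← mul_assoc, ← hz] at hL
      rw [← hL, ellE_symm_mk_tp]
      set y := (ellE n ε).symm (mq (f * X ^ (j : ℕ))) with hy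
      have hyD : y ∈ D := by
        rw [mem_D_iff n ε D f hD]
        have h1 : mq (tp y) = mq (f * X ^ (j : ℕ)) := by
          have h2 := (ellE n ε).apply_symm_apply (mq (f * X ^ (j : ℕ)))
          rw [hy]
          exact h2
        rw [h1]
        exact Ideal.mem_span_singleton'.mpr ⟨mq (X ^ (j : ℕ)), by rw [← map_mul, mul_comm]⟩
      exact hc y hyD
    have h0 : (ellE n ε).symm z = 0 := funext hz0
    have h1 := congrArg (ellE n ε) h0
    rwa [(ellE n ε).apply_symm_apply, map_zero] at h1
  · intro h0 y hy
    rw [mem_D_iff n ε D f hD] at hy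
    obtain ⟨w, hw⟩ := Ideal.mem_span_singleton'.mp hy
    obtain ⟨g, rfl⟩ := Ideal.Quotient.mk_surjective w
    have hq : mq (g * f) = mq (tp y) := by rw [map_mul]; exact hw
    have hL := L1 n ε ha (tp c) (g * f)
    rw [hq, ellE_symm_mk_tp, ellE_symm_mk_tp] at hL
    have h1 : mq (tp c) * aeval (uq n ε) (g * f) = 0 := by
      rw [map_mul (aeval (uq n ε)), mul_comm ((aeval (uq n ε)) g), ← mul_assoc, h0, zero_mul]
    rw [h1, map_zero] at hL
    simpa [inn] using hL

include ha in
lemma L3 (f h : (ZMod 3)[X]) (hfh : f * h = X ^ n - C ε)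
    (z : (ZMod 3)[X] ⧸ Ideal.span {(X ^ n - C ε : (ZMod 3)[X])}) :
    z * aeval (uq n ε) f = 0 ↔ z ∈ Ideal.span {mq (reverse h)} := by
  have hM0 : (X ^ n - C ε : (ZMod 3)[X]) ≠ 0 := (M_monic n ε).ne_zero
  have hf0 : f ≠ 0 := fun hf => hM0 (by rw [← hfh, hf, zero_mul])
  have hrf0 : reverse f ≠ 0 := fun hc => hf0 (reverse_eq_zero.mp hc)
  have hC : (C ε : (ZMod 3)[X]) * C ε = 1 := by rw [← C_mul, ha, C_1]
  have hrevM : reverse (X ^ n - C ε : (ZMod 3)[X]) = 1 - C ε * X ^ n := by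
    have hnd : (X ^ n - C ε : (ZMod 3)[X]).natDegree = n := natDegree_X_pow_sub_C
    have hw : (X ^ n - C ε : (ZMod 3)[X]) = C 1 * X ^ n + C (-ε) * X ^ 0 := by
      rw [C_1, one_mul, pow_zero, mul_one, map_neg, sub_eq_add_neg]
    rw [reverse, hnd, hw, reflect_add, reflect_C_mul_X_pow, reflect_C_mul_X_pow,
      revAt_le (le_refl n), revAt_le (Nat.zero_le n)]
    simp only [Nat.sub_self, Nat.sub_zero, pow_zero, C_1, one_mul, mul_one, map_neg, neg_mul]
    rw [← sub_eq_add_neg]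
  have hM : (-(C ε)) * (reverse f * reverse h) = (X ^ n - C ε : (ZMod 3)[X]) := by
    rw [← reverse_mul_of_domain, hfh, hrevM]
    linear_combination (X ^ n : (ZMod 3)[X]) * hC
  constructor
  · intro h0
    obtain ⟨b, rfl⟩ := Ideal.Quotient.mk_surjective z
    have hzr : mq (b * reverse f) = 0 := by
      rw [map_mul, ← RL n ε ha f, mul_left_comm, h0, mul_zero]
    have hdvd : (X ^ n - C ε : (ZMod 3)[X]) ∣ b * reverse f := by
      rw [← Ideal.mem_span_singleton]
      exact Ideal.Quotient.eq_zero_iff_mem.mp hzr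
    obtain ⟨t, ht⟩ := hdvd
    have hb : b = (-(C ε)) * reverse h * t := by
      apply mul_right_cancel₀ hrf0
      rw [ht, ← hM]
      ring
    rw [hb]
    refine Ideal.mem_span_singleton'.mpr ⟨mq ((-(C ε)) * t), ?_⟩
    rw [← map_mul]
    congr 1
    ring
  · intro hz
    obtain ⟨w, hw⟩ := Ideal.mem_span_singleton'.mp hz
    have e1 : mq (reverse h) * ((xq n ε) ^ f.natDegree * aeval (uq n ε) f) = 0 := by
      rw [RL n ε ha f, ← map_mul]
      apply Ideal.Quotient.eq_zero_iff_mem.mpr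
      rw [Ideal.mem_span_singleton]
      refine ⟨-(C ε), ?_⟩
      linear_combination (-(C ε) : (ZMod 3)[X]) * hM - reverse f * reverse h * hC
    have hxu : (xq n ε) ^ f.natDegree * (uq n ε) ^ f.natDegree = 1 := by
      have h1 := xq_pow_mul_uq_pow n ε ha f.natDegree 0
      simpa using h1
    have e2 : mq (reverse h) * aeval (uq n ε) f = 0 := by
      have h1 := congrArg (fun t => (uq n ε) ^ f.natDegree * t) e1
      simp only [mul_zero] at h1
      rw [show (uq n ε) ^ f.natDegree
            * (mq (reverse h) * ((xq n ε) ^ f.natDegree * aeval (uq n ε) f))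
          = ((xq n ε) ^ f.natDegree * (uq n ε) ^ f.natDegree)
            * (mq (reverse h) * aeval (uq n ε) f) by ring, hxu, one_mul] at h1
      exact h1
    rw [← hw, mul_assoc, e2, mul_zero]

include ha in
lemma mem_dual_iff (D : Submodule (ZMod 3) (Fin n → ZMod 3)) (f h : (ZMod 3)[X])
    (hfh : f * h = X ^ n - C ε)
    (hD : {p | ∃ c ∈ D, p = mq (tp c)} = ↑(Ideal.span {mq f})) (c : Fin n → ZMod 3) :
    c ∈ dualZ D ↔ mq (tp c) ∈ Ideal.span {mq (reverse h)} :=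
  (L2 n ε ha D f hD c).trans (L3 n ε ha f h hfh _)

include ha in
theorem terA (D : Submodule (ZMod 3) (Fin n → ZMod 3)) (f h : (ZMod 3)[X])
    (hfh : f * h = X ^ n - C ε)
    (hD : {p | ∃ c ∈ D, p = mq (tp c)} = ↑(Ideal.span {mq f})) :
    {p | ∃ c ∈ dualZ D, p = mq (tp c)} = ↑(Ideal.span {mq (reverse h)}) := by
  ext z
  constructor
  · rintro ⟨c, hc, rfl⟩
    exact (mem_dual_iff n ε ha D f h hfh hD c).mp hc
  · intro hz
    refine ⟨(ellE n ε).symm z, ?_, ?_⟩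
    · rw [mem_dual_iff n ε ha D f h hfh hD]
      have h1 : mq (tp ((ellE n ε).symm z)) = z := (ellE n ε).apply_symm_apply z
      rw [h1]
      exact hz
    · exact ((ellE n ε).apply_symm_apply z).symm

lemma card_span (f' h'' : (ZMod 3)[X]) (hm : f'.Monic) (heq : f' * h'' = X ^ n - C ε) :
    Nat.card (↥(Ideal.span {mq h''})) = 3 ^ f'.natDegree := by
  have hM0 : (X ^ n - C ε : (ZMod 3)[X]) ≠ 0 := (M_monic n ε).ne_zero
  have hh0 : h'' ≠ 0 := fun hh => hM0 (by rw [← heq, hh, mul_zero])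
  have hdeg : f'.degree = (f'.natDegree : ℕ) := degree_eq_natDegree hm.ne_zero
  have hmem : ∀ c : Fin f'.natDegree → ZMod 3, mq (tp c * h'') ∈ Ideal.span {mq h''} :=
    fun c => Ideal.mem_span_singleton'.mpr ⟨mq (tp c), by rw [← map_mul]⟩
  let Φ : (Fin f'.natDegree → ZMod 3) → ↥(Ideal.span {mq h''}) :=
    fun c => ⟨mq (tp c * h''), hmem c⟩
  have hbij : Function.Bijective Φ := by
    constructor
    · intro c c' hcc
      have h1 : mq ((tp c - tp c') * h'') = 0 := by
        rw [sub_mul, map_sub, sub_eq_zero]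
        exact congrArg Subtype.val hcc
      have h2 : (X ^ n - C ε : (ZMod 3)[X]) ∣ (tp c - tp c') * h'' := by
        rw [← Ideal.mem_span_singleton]
        exact Ideal.Quotient.eq_zero_iff_mem.mp h1
      obtain ⟨t, ht⟩ := h2
      rw [← heq] at ht
      have h3 : tp c - tp c' = f' * t := by
        apply mul_right_cancel₀ hh0
        rw [ht]; ring
      have h4 : tp c - tp c' = 0 := by
        by_cases h5 : t = 0
        · rw [h3, h5, mul_zero]
        · exfalso
          have h6 : (tp c - tp c').degree < f'.degree := by
            rw [hdeg]
            exact lt_of_le_of_lt (degree_sub_le _ _) (max_lt (tp_degree c) (tp_degree c'))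
          have h7 : f'.degree ≤ (tp c - tp c').degree := by
            rw [h3, degree_mul]
            exact le_add_of_nonneg_right (zero_le_degree_iff.mpr h5)
          exact absurd h6 (not_lt.mpr h7)
      have h8 : tp (c - c') = 0 := by rw [tp_sub, h4]
      have h9 := tp_eq_zero h8
      funext i
      have := congrFun h9 i
      simpa [sub_eq_zero] using this
    · rintro ⟨z, hz⟩
      obtain ⟨w, hw⟩ := Ideal.mem_span_singleton'.mp hz
      obtain ⟨b, rfl⟩ := Ideal.Quotient.mk_surjective w
      refine ⟨fun i => (b %ₘ f').coeff i, Subtype.ext ?_⟩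
      show mq (tp _ * h'') = z
      have hr : tp (fun i : Fin f'.natDegree => (b %ₘ f').coeff i) = b %ₘ f' := by
        apply tp_eq_self
        have h1 := degree_modByMonic_lt b hm
        rwa [hdeg] at h1
      rw [hr, ← hw, ← map_mul]
      rw [Ideal.Quotient.mk_eq_mk_iff_sub_mem, Ideal.mem_span_singleton]
      have hdiv := modByMonic_add_div b f'
      exact ⟨-(b /ₘ f'), by linear_combination h'' * hdiv - (b /ₘ f') * heq⟩
  rw [Nat.card_congr (Equiv.ofBijective Φ hbij).symm, Nat.card_fun, Nat.card_zmod]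
  simp

include ha in
lemma hM_lemma (f h : (ZMod 3)[X]) (hfh : f * h = X ^ n - C ε) :
    (-(C ε)) * (reverse f * reverse h) = (X ^ n - C ε : (ZMod 3)[X]) := by
  have hC : (C ε : (ZMod 3)[X]) * C ε = 1 := by rw [← C_mul, ha, C_1]
  have hrevM : reverse (X ^ n - C ε : (ZMod 3)[X]) = 1 - C ε * X ^ n := by
    have hnd : (X ^ n - C ε : (ZMod 3)[X]).natDegree = n := natDegree_X_pow_sub_C
    have hw : (X ^ n - C ε : (ZMod 3)[X]) = C 1 * X ^ n + C (-ε) * X ^ 0 := by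
      rw [C_1, one_mul, pow_zero, mul_one, map_neg, sub_eq_add_neg]
    rw [reverse, hnd, hw, reflect_add, reflect_C_mul_X_pow, reflect_C_mul_X_pow,
      revAt_le (le_refl n), revAt_le (Nat.zero_le n)]
    simp only [Nat.sub_self, Nat.sub_zero, pow_zero, C_1, one_mul, mul_one, map_neg, neg_mul]
    rw [← sub_eq_add_neg]
  rw [← reverse_mul_of_domain, hfh, hrevM]
  linear_combination (X ^ n : (ZMod 3)[X]) * hC

include ha in
theorem terB (D : Submodule (ZMod 3) (Fin n → ZMod 3)) (f h : (ZMod 3)[X])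
    (hfh : f * h = X ^ n - C ε)
    (hD : {p | ∃ c ∈ D, p = mq (tp c)} = ↑(Ideal.span {mq f})) :
    Nat.card (↥(dualZ D)) = 3 ^ f.natDegree := by
  have hM0 : (X ^ n - C ε : (ZMod 3)[X]) ≠ 0 := (M_monic n ε).ne_zero
  have hf0 : f ≠ 0 := fun hf => hM0 (by rw [← hfh, hf, zero_mul])
  have hrf0 : reverse f ≠ 0 := fun hc => hf0 (reverse_eq_zero.mp hc)
  have hε0 : ε ≠ 0 := by
    intro h0
    rw [h0] at ha
    simp at ha
  have hM := hM_lemma n ε ha f h hfh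
  set u := (reverse f).leadingCoeff with hu
  have hu0 : u ≠ 0 := leadingCoeff_ne_zero.mpr hrf0
  set f' := reverse f * C u⁻¹ with hf'
  set h'' := (C (-ε * u)) * reverse h with hh''
  have hm : f'.Monic := monic_mul_leadingCoeff_inv hrf0
  have hCu : (C u⁻¹ : (ZMod 3)[X]) * C u = 1 := by
    rw [← C_mul, inv_mul_cancel₀ hu0, C_1]
  have heq : f' * h'' = (X ^ n - C ε : (ZMod 3)[X]) := by
    rw [hf', hh'', C_mul, C_neg]
    linear_combination hM + (-(C ε) * reverse f * reverse h) * hCu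
  have hcard1 : Nat.card (↥(Ideal.span {mq h''})) = 3 ^ f'.natDegree :=
    card_span n ε f' h'' hm heq
  have hdf' : f'.natDegree = f.natDegree := by
    have h1 : f'.natDegree = (reverse f).natDegree := by
      rw [hf', natDegree_mul hrf0 (fun hc => (inv_ne_zero hu0) (C_eq_zero.mp hc)),
        natDegree_C, add_zero]
    have h3 : f.natTrailingDegree = 0 := by
      rw [natTrailingDegree_eq_zero]
      right
      intro hc0
      have h4 : (f * h).coeff 0 = 0 := by rw [mul_coeff_zero, hc0, zero_mul]
      have h5 : ((X : (ZMod 3)[X]) ^ n - C ε).coeff 0 = -ε := by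
        rw [coeff_sub, coeff_X_pow, if_neg (Ne.symm (NeZero.ne n)), coeff_C_zero, zero_sub]
      rw [hfh, h5] at h4
      exact hε0 (neg_eq_zero.mp h4)
    rw [h1, reverse_natDegree, h3, Nat.sub_zero]
  have hunit : IsUnit (mq (C (-ε * u))) := by
    apply IsUnit.of_mul_eq_one (mq (C (-ε * u)⁻¹))
    rw [← map_mul, ← C_mul, mul_inv_cancel₀ (by simp [hε0, hu0] : (-ε * u) ≠ 0), C_1, map_one]
  have hspan : Ideal.span {mq (reverse h)} = Ideal.span {mq h''} := by
    rw [hh'', map_mul, Ideal.span_singleton_mul_left_unit hunit]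
  let e : ↥(dualZ D) ≃ ↥(Ideal.span {mq (reverse h)}) :=
    { toFun := fun c => ⟨mq (tp c.1), (mem_dual_iff n ε ha D f h hfh hD c.1).mp c.2⟩
      invFun := fun z => ⟨(ellE n ε).symm z.1, by
        rw [mem_dual_iff n ε ha D f h hfh hD, mk_tp_symm n ε z.1]
        exact z.2⟩
      left_inv := fun c => Subtype.ext (ellE_symm_mk_tp n ε c.1)
      right_inv := fun z => Subtype.ext (mk_tp_symm n ε z.1) }
  rw [Nat.card_congr e, hspan, hcard1, hdf']

end Ternary

section Rside
open Polynomial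

instance : Nontrivial R3 :=
  ⟨⟨0, 1, fun h => by
    have h2 : (0 : ZMod 3) = 1 := by
      have h3 := congrArg R3.a h
      simpa using h3
    exact absurd h2 (by decide)⟩⟩

lemma h30 : (3 : ZMod 3) = 0 := by decide

/-- evaluation at v = 0 -/
def π1 : R3 →+* ZMod 3 where
  toFun r := r.a
  map_one' := rfl
  map_mul' x y := rfl
  map_zero' := rfl
  map_add' x y := rfl

/-- evaluation at v = 1 -/
def π2 : R3 →+* ZMod 3 where
  toFun r := r.a + r.b + r.c
  map_one' := by simp
  map_mul' x y := by simp only [R3.mul_a, R3.mul_b, R3.mul_c]; ring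
  map_zero' := by simp
  map_add' x y := by simp only [R3.add_a, R3.add_b, R3.add_c]; ring

/-- evaluation at v = 2 -/
def π3 : R3 →+* ZMod 3 where
  toFun r := r.a + 2 * r.b + r.c
  map_one' := by simp
  map_mul' x y := by
    simp only [R3.mul_a, R3.mul_b, R3.mul_c]
    linear_combination (-(x.b * y.b)) * h30
  map_zero' := by simp
  map_add' x y := by simp only [R3.add_a, R3.add_b, R3.add_c]; ring

@[simp] lemma π1_iota (t : ZMod 3) : π1 (R3.iota t) = t := rfl
@[simp] lemma π2_iota (t : ZMod 3) : π2 (R3.iota t) = t := by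
  show t + 0 + 0 = t; ring
@[simp] lemma π3_iota (t : ZMod 3) : π3 (R3.iota t) = t := by
  show t + 2 * 0 + 0 = t; ring

lemma pi_inj {r s : R3} (h1 : π1 r = π1 s) (h2 : π2 r = π2 s) (h3 : π3 r = π3 s) :
    r = s := by
  have e1 : r.a = s.a := h1
  have e2 : r.a + r.b + r.c = s.a + s.b + s.c := h2
  have e3 : r.a + 2 * r.b + r.c = s.a + 2 * s.b + s.c := h3
  ext
  · exact e1
  · linear_combination e3 - e2
  · linear_combination 2 * e2 - e3 - e1

/-- inverse of the CRT decomposition -/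
def σ3 (p q r : ZMod 3) : R3 := ⟨p, 2 * q + r, 2 * p + 2 * q + 2 * r⟩

@[simp] lemma π1_σ (p q r : ZMod 3) : π1 (σ3 p q r) = p := rfl
@[simp] lemma π2_σ (p q r : ZMod 3) : π2 (σ3 p q r) = q := by
  show p + (2 * q + r) + (2 * p + 2 * q + 2 * r) = q
  linear_combination (p + q + r) * h30
@[simp] lemma π3_σ (p q r : ZMod 3) : π3 (σ3 p q r) = r := by
  show p + 2 * (2 * q + r) + (2 * p + 2 * q + 2 * r) = r
  linear_combination (p + 2 * q + r) * h30

lemma σ_π (x : R3) : σ3 (π1 x) (π2 x) (π3 x) = x := by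
  have e1 : π1 x = x.a := rfl
  have e2 : π2 x = x.a + x.b + x.c := rfl
  have e3 : π3 x = x.a + 2 * x.b + x.c := rfl
  ext
  · exact e1
  · show 2 * π2 x + π3 x = x.b
    rw [e2, e3]
    linear_combination (x.a + x.b + x.c) * h30
  · show 2 * π1 x + 2 * π2 x + 2 * π3 x = x.c
    rw [e1, e2, e3]
    linear_combination (2 * x.a + 2 * x.b + x.c) * h30

@[simp] lemma π1_v : π1 R3.v = 0 := rfl
@[simp] lemma π2_v : π2 R3.v = 1 := by decide
@[simp] lemma π3_v : π3 R3.v = 2 := by decide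

@[simp] lemma π1_e1 : π1 e1 = 1 := by
  rw [e1, map_add, map_one, map_mul, map_pow, map_ofNat, π1_v]; decide
@[simp] lemma π2_e1 : π2 e1 = 0 := by
  rw [e1, map_add, map_one, map_mul, map_pow, map_ofNat, π2_v]; decide
@[simp] lemma π3_e1 : π3 e1 = 0 := by
  rw [e1, map_add, map_one, map_mul, map_pow, map_ofNat, π3_v]; decide
@[simp] lemma π1_e2 : π1 e2 = 0 := by
  rw [e2, map_add, map_mul, map_mul, map_pow, map_ofNat, π1_v]; decide
@[simp] lemma π2_e2 : π2 e2 = 1 := by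
  rw [e2, map_add, map_mul, map_mul, map_pow, map_ofNat, π2_v]; decide
@[simp] lemma π3_e2 : π3 e2 = 0 := by
  rw [e2, map_add, map_mul, map_mul, map_pow, map_ofNat, π3_v]; decide
@[simp] lemma π1_e3 : π1 e3 = 0 := by
  rw [e3, map_add, map_mul, map_pow, map_ofNat, π1_v]; decide
@[simp] lemma π2_e3 : π2 e3 = 0 := by
  rw [e3, map_add, map_mul, map_pow, map_ofNat, π2_v]; decide
@[simp] lemma π3_e3 : π3 e3 = 1 := by
  rw [e3, map_add, map_mul, map_pow, map_ofNat, π3_v]; decide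

end Rside

section RsideN
open Polynomial
variable {n : ℕ} [NeZero n]

lemma tri_coord1 (x y z : Fin n → ZMod 3) (i : Fin n) :
    π1 ((e1 • emb x + e2 • emb y + e3 • emb z) i) = x i := by
  simp [emb, Pi.add_apply, Pi.smul_apply, smul_eq_mul, map_add, map_mul]

lemma tri_coord2 (x y z : Fin n → ZMod 3) (i : Fin n) :
    π2 ((e1 • emb x + e2 • emb y + e3 • emb z) i) = y i := by
  simp [emb, Pi.add_apply, Pi.smul_apply, smul_eq_mul, map_add, map_mul]

lemma tri_coord3 (x y z : Fin n → ZMod 3) (i : Fin n) :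
    π3 ((e1 • emb x + e2 • emb y + e3 • emb z) i) = z i := by
  simp [emb, Pi.add_apply, Pi.smul_apply, smul_eq_mul, map_add, map_mul]

lemma dual_decomp (C : Submodule R3 (Fin n → R3))
    (C₁ C₂ C₃ : Submodule (ZMod 3) (Fin n → ZMod 3))
    (hC : (C : Set (Fin n → R3)) = tri (C₁ : Set (Fin n → ZMod 3)) C₂ C₃)
    (c : Fin n → R3) :
    c ∈ dualR C ↔ ((fun i => π1 (c i)) ∈ dualZ C₁ ∧ (fun i => π2 (c i)) ∈ dualZ C₂
      ∧ (fun i => π3 (c i)) ∈ dualZ C₃) := by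
  have hmem : ∀ w : Fin n → R3, w ∈ C ↔ w ∈ tri (C₁ : Set (Fin n → ZMod 3)) C₂ C₃ := by
    intro w
    rw [← hC]
    exact Iff.rfl
  constructor
  · intro hc
    refine ⟨?_, ?_, ?_⟩
    · intro x hx
      have hyC : (e1 • emb x + e2 • emb (0 : Fin n → ZMod 3)
          + e3 • emb (0 : Fin n → ZMod 3)) ∈ C := by
        rw [hmem]
        exact ⟨x, hx, 0, C₂.zero_mem, 0, C₃.zero_mem, rfl⟩
      have h0 := hc _ hyC
      have h1 := congrArg π1 h0
      rw [map_sum, map_zero] at h1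
      show ∑ i, π1 (c i) * x i = 0
      rw [← h1]
      exact Finset.sum_congr rfl fun i _ => by rw [map_mul, tri_coord1]
    · intro x hx
      have hyC : (e1 • emb (0 : Fin n → ZMod 3) + e2 • emb x
          + e3 • emb (0 : Fin n → ZMod 3)) ∈ C := by
        rw [hmem]
        exact ⟨0, C₁.zero_mem, x, hx, 0, C₃.zero_mem, rfl⟩
      have h0 := hc _ hyC
      have h1 := congrArg π2 h0
      rw [map_sum, map_zero] at h1
      show ∑ i, π2 (c i) * x i = 0
      rw [← h1]
      exact Finset.sum_congr rfl fun i _ => by rw [map_mul, tri_coord2]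
    · intro x hx
      have hyC : (e1 • emb (0 : Fin n → ZMod 3) + e2 • emb (0 : Fin n → ZMod 3)
          + e3 • emb x) ∈ C := by
        rw [hmem]
        exact ⟨0, C₁.zero_mem, 0, C₂.zero_mem, x, hx, rfl⟩
      have h0 := hc _ hyC
      have h1 := congrArg π3 h0
      rw [map_sum, map_zero] at h1
      show ∑ i, π3 (c i) * x i = 0
      rw [← h1]
      exact Finset.sum_congr rfl fun i _ => by rw [map_mul, tri_coord3]
  · rintro ⟨hc1, hc2, hc3⟩ y hy
    rw [hmem] at hy
    obtain ⟨x, hx, y2, hy2, z2, hz2, rfl⟩ := hy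
    refine pi_inj ?_ ?_ ?_
    · rw [map_sum, map_zero]
      have h1 := hc1 x hx
      rw [← h1]
      exact Finset.sum_congr rfl fun i _ => by rw [map_mul, tri_coord1]
    · rw [map_sum, map_zero]
      have h1 := hc2 y2 hy2
      rw [← h1]
      exact Finset.sum_congr rfl fun i _ => by rw [map_mul, tri_coord2]
    · rw [map_sum, map_zero]
      have h1 := hc3 z2 hz2
      rw [← h1]
      exact Finset.sum_congr rfl fun i _ => by rw [map_mul, tri_coord3]

lemma part2 (C : Submodule R3 (Fin n → R3))
    (C₁ C₂ C₃ : Submodule (ZMod 3) (Fin n → ZMod 3))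
    (hC : (C : Set (Fin n → R3)) = tri (C₁ : Set (Fin n → ZMod 3)) C₂ C₃) :
    Nat.card (dualR C) = Nat.card (dualZ C₁) * Nat.card (dualZ C₂) * Nat.card (dualZ C₃) := by
  have e : ↥(dualR C) ≃ (↥(dualZ C₁) × ↥(dualZ C₂) × ↥(dualZ C₃)) :=
    { toFun := fun c =>
        ⟨⟨fun i => π1 (c.1 i), ((dual_decomp C C₁ C₂ C₃ hC c.1).mp c.2).1⟩,
         ⟨fun i => π2 (c.1 i), ((dual_decomp C C₁ C₂ C₃ hC c.1).mp c.2).2.1⟩,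
         ⟨fun i => π3 (c.1 i), ((dual_decomp C C₁ C₂ C₃ hC c.1).mp c.2).2.2⟩⟩
      invFun := fun t =>
        ⟨fun i => σ3 (t.1.1 i) (t.2.1.1 i) (t.2.2.1 i), by
          rw [dual_decomp C C₁ C₂ C₃ hC]
          refine ⟨?_, ?_, ?_⟩
          · have h1 : (fun i => π1 (σ3 (t.1.1 i) (t.2.1.1 i) (t.2.2.1 i))) = t.1.1 :=
              funext fun i => π1_σ _ _ _
            rw [h1]; exact t.1.2
          · have h1 : (fun i => π2 (σ3 (t.1.1 i) (t.2.1.1 i) (t.2.2.1 i))) = t.2.1.1 :=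
              funext fun i => π2_σ _ _ _
            rw [h1]; exact t.2.1.2
          · have h1 : (fun i => π3 (σ3 (t.1.1 i) (t.2.1.1 i) (t.2.2.1 i))) = t.2.2.1 :=
              funext fun i => π3_σ _ _ _
            rw [h1]; exact t.2.2.2⟩
      left_inv := fun c => Subtype.ext (funext fun i => σ_π (c.1 i))
      right_inv := fun t => by
        refine Prod.ext (Subtype.ext (funext fun i => π1_σ _ _ _))
          (Prod.ext (Subtype.ext (funext fun i => π2_σ _ _ _))
            (Subtype.ext (funext fun i => π3_σ _ _ _))) }
  rw [Nat.card_congr e, Nat.card_prod, Nat.card_prod, mul_assoc]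

end RsideN

section RsideP
open Polynomial
variable (n : ℕ) [NeZero n] (ε : ZMod 3)

local notation "mqK" => Ideal.Quotient.mk (Ideal.span {(X ^ n - C ε : (ZMod 3)[X])})
local notation "mqR" => Ideal.Quotient.mk (Ideal.span {(X ^ n - C (R3.iota ε) : R3[X])})

lemma tp_map {m : ℕ} (π : R3 →+* ZMod 3) (c : Fin m → R3) :
    (tp c).map π = tp (fun i => π (c i)) := by
  show (mapRingHom π) (tp c) = _
  rw [tp, map_sum, tp]
  refine Finset.sum_congr rfl fun i _ => ?_
  rw [map_mul, map_pow]
  simp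

/-- the induced map on the quotient polynomial rings -/
noncomputable def PP (π : R3 →+* ZMod 3) (hι : ∀ t, π (R3.iota t) = t) :
    (R3[X] ⧸ Ideal.span {(X ^ n - C (R3.iota ε) : R3[X])}) →+*
      ((ZMod 3)[X] ⧸ Ideal.span {(X ^ n - C ε : (ZMod 3)[X])}) :=
  Ideal.Quotient.lift _
    ((Ideal.Quotient.mk (Ideal.span {(X ^ n - C ε : (ZMod 3)[X])})).comp (mapRingHom π))
    (by
      intro p hp
      rw [Ideal.mem_span_singleton] at hp
      obtain ⟨g, rfl⟩ := hp
      rw [RingHom.comp_apply, map_mul, map_mul]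
      have hmap : (mapRingHom π) (X ^ n - C (R3.iota ε) : R3[X]) = X ^ n - C ε := by
        show (X ^ n - C (R3.iota ε) : R3[X]).map π = _
        rw [Polynomial.map_sub, Polynomial.map_pow, map_X, map_C, hι]
      rw [hmap]
      have h0 : mqK (X ^ n - C ε : (ZMod 3)[X]) = 0 :=
        Ideal.Quotient.eq_zero_iff_mem.mpr (Ideal.mem_span_singleton_self _)
      rw [h0, zero_mul])

lemma PP_mk (π : R3 →+* ZMod 3) (hι : ∀ t, π (R3.iota t) = t) (p : R3[X]) :
    PP n ε π hι (mqR p) = mqK (p.map π) :=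
  Ideal.Quotient.lift_mk _ _ _

lemma PP_glue (π : R3 →+* ZMod 3) (hι : ∀ t, π (R3.iota t) = t) (a1 a2 a3 : (ZMod 3)[X]) :
    PP n ε π hι (mqR (C e1 * a1.map R3.iota + C e2 * a2.map R3.iota + C e3 * a3.map R3.iota))
      = mqK (C (π e1) * a1 + C (π e2) * a2 + C (π e3) * a3) := by
  rw [PP_mk]
  congr 1
  have hcomp : π.comp R3.iota = RingHom.id (ZMod 3) := RingHom.ext fun t => hι t
  rw [Polynomial.map_add, Polynomial.map_add, Polynomial.map_mul, Polynomial.map_mul,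
    Polynomial.map_mul, map_C, map_C, map_C, Polynomial.map_map, Polynomial.map_map,
    Polynomial.map_map, hcomp, Polynomial.map_id, Polynomial.map_id, Polynomial.map_id]

lemma PP_inj (z w : R3[X] ⧸ Ideal.span {(X ^ n - C (R3.iota ε) : R3[X])})
    (h1 : PP n ε π1 π1_iota z = PP n ε π1 π1_iota w)
    (h2 : PP n ε π2 π2_iota z = PP n ε π2 π2_iota w)
    (h3 : PP n ε π3 π3_iota z = PP n ε π3 π3_iota w) : z = w := by
  set c := (ellE n (R3.iota ε)).symm z with hcdef
  set d := (ellE n (R3.iota ε)).symm w with hddef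
  have hzc : mqR (tp c) = z := mk_tp_symm n (R3.iota ε) z
  have hwd : mqR (tp d) = w := mk_tp_symm n (R3.iota ε) w
  have key : ∀ (π : R3 →+* ZMod 3) (hι : ∀ t, π (R3.iota t) = t)
      (u : R3[X] ⧸ Ideal.span {(X ^ n - C (R3.iota ε) : R3[X])}),
      PP n ε π hι u = mqK (tp (fun i => π (((ellE n (R3.iota ε)).symm u) i))) := by
    intro π hι u
    conv_lhs => rw [← mk_tp_symm n (R3.iota ε) u]
    rw [PP_mk, tp_map]
  rw [key π1 _ z, key π1 _ w] at h1
  rw [key π2 _ z, key π2 _ w] at h2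
  rw [key π3 _ z, key π3 _ w] at h3
  have e1' : (fun i => π1 (c i)) = fun i => π1 (d i) := ell_injective n ε h1
  have e2' : (fun i => π2 (c i)) = fun i => π2 (d i) := ell_injective n ε h2
  have e3' : (fun i => π3 (c i)) = fun i => π3 (d i) := ell_injective n ε h3
  have hcd : c = d := funext fun i =>
    pi_inj (congrFun e1' i) (congrFun e2' i) (congrFun e3' i)
  rw [← hzc, ← hwd, hcd]

lemma part1 (CC : Submodule R3 (Fin n → R3))
    (C₁ C₂ C₃ : Submodule (ZMod 3) (Fin n → ZMod 3))
    (g1 g2 g3 : (ZMod 3)[X])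
    (hC : (CC : Set (Fin n → R3)) = tri (C₁ : Set (Fin n → ZMod 3)) C₂ C₃)
    (hA1 : {p | ∃ c ∈ dualZ C₁, p = mqK (tp c)} = ↑(Ideal.span {mqK g1}))
    (hA2 : {p | ∃ c ∈ dualZ C₂, p = mqK (tp c)} = ↑(Ideal.span {mqK g2}))
    (hA3 : {p | ∃ c ∈ dualZ C₃, p = mqK (tp c)} = ↑(Ideal.span {mqK g3})) :
    {p | ∃ c ∈ dualR CC, p = mqR (tp c)}
      = ↑(Ideal.span {mqR (C e1 * g1.map R3.iota + C e2 * g2.map R3.iota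
          + C e3 * g3.map R3.iota)}) := by
  set G := mqR (C e1 * g1.map R3.iota + C e2 * g2.map R3.iota + C e3 * g3.map R3.iota)
    with hGdef
  have hP1G : PP n ε π1 π1_iota G = mqK g1 := by
    rw [hGdef, PP_glue]
    simp
  have hP2G : PP n ε π2 π2_iota G = mqK g2 := by
    rw [hGdef, PP_glue]
    simp
  have hP3G : PP n ε π3 π3_iota G = mqK g3 := by
    rw [hGdef, PP_glue]
    simp
  have hspan : ∀ z, z ∈ Ideal.span {G} ↔
      (PP n ε π1 π1_iota z ∈ Ideal.span {mqK g1}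
        ∧ PP n ε π2 π2_iota z ∈ Ideal.span {mqK g2}
        ∧ PP n ε π3 π3_iota z ∈ Ideal.span {mqK g3}) := by
    intro z
    constructor
    · intro hz
      obtain ⟨w, hw⟩ := Ideal.mem_span_singleton'.mp hz
      refine ⟨?_, ?_, ?_⟩
      · rw [← hw, map_mul, hP1G]
        exact Ideal.mem_span_singleton'.mpr ⟨_, rfl⟩
      · rw [← hw, map_mul, hP2G]
        exact Ideal.mem_span_singleton'.mpr ⟨_, rfl⟩
      · rw [← hw, map_mul, hP3G]
        exact Ideal.mem_span_singleton'.mpr ⟨_, rfl⟩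
    · rintro ⟨hz1, hz2, hz3⟩
      obtain ⟨b1, hb1⟩ := Ideal.mem_span_singleton'.mp hz1
      obtain ⟨b2, hb2⟩ := Ideal.mem_span_singleton'.mp hz2
      obtain ⟨b3, hb3⟩ := Ideal.mem_span_singleton'.mp hz3
      obtain ⟨a1, ha1⟩ := Ideal.Quotient.mk_surjective b1
      obtain ⟨a2, ha2⟩ := Ideal.Quotient.mk_surjective b2
      obtain ⟨a3, ha3⟩ := Ideal.Quotient.mk_surjective b3
      set w := mqR (C e1 * a1.map R3.iota + C e2 * a2.map R3.iota + C e3 * a3.map R3.iota)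
        with hwdef
      have hw1 : PP n ε π1 π1_iota w = mqK a1 := by
        rw [hwdef, PP_glue]; simp
      have hw2 : PP n ε π2 π2_iota w = mqK a2 := by
        rw [hwdef, PP_glue]; simp
      have hw3 : PP n ε π3 π3_iota w = mqK a3 := by
        rw [hwdef, PP_glue]; simp
      have hzw : z = w * G := by
        apply PP_inj n ε
        · rw [map_mul, hw1, hP1G, ha1, hb1]
        · rw [map_mul, hw2, hP2G, ha2, hb2]
        · rw [map_mul, hw3, hP3G, ha3, hb3]
      rw [hzw]
      exact Ideal.mem_span_singleton'.mpr ⟨w, rfl⟩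
  ext z
  constructor
  · rintro ⟨c, hc, rfl⟩
    have hd := (dual_decomp CC C₁ C₂ C₃ hC c).mp hc
    have key1 : PP n ε π1 π1_iota (mqR (tp c)) = mqK (tp (fun i => π1 (c i))) := by
      rw [PP_mk, tp_map]
    have key2 : PP n ε π2 π2_iota (mqR (tp c)) = mqK (tp (fun i => π2 (c i))) := by
      rw [PP_mk, tp_map]
    have key3 : PP n ε π3 π3_iota (mqR (tp c)) = mqK (tp (fun i => π3 (c i))) := by
      rw [PP_mk, tp_map]
    apply (hspan _).mpr
    refine ⟨?_, ?_, ?_⟩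
    · rw [key1]
      have h1 : mqK (tp (fun i => π1 (c i))) ∈ {p | ∃ c ∈ dualZ C₁, p = mqK (tp c)} :=
        ⟨_, hd.1, rfl⟩
      rw [hA1] at h1
      exact h1
    · rw [key2]
      have h1 : mqK (tp (fun i => π2 (c i))) ∈ {p | ∃ c ∈ dualZ C₂, p = mqK (tp c)} :=
        ⟨_, hd.2.1, rfl⟩
      rw [hA2] at h1
      exact h1
    · rw [key3]
      have h1 : mqK (tp (fun i => π3 (c i))) ∈ {p | ∃ c ∈ dualZ C₃, p = mqK (tp c)} :=
        ⟨_, hd.2.2, rfl⟩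
      rw [hA3] at h1
      exact h1
  · intro hz
    have h3 := (hspan z).mp hz
    set c := (ellE n (R3.iota ε)).symm z with hcdef
    have hzc : mqR (tp c) = z := mk_tp_symm n (R3.iota ε) z
    refine ⟨c, ?_, hzc.symm⟩
    rw [dual_decomp CC C₁ C₂ C₃ hC c]
    have key1 : PP n ε π1 π1_iota z = mqK (tp (fun i => π1 (c i))) := by
      rw [← hzc, PP_mk, tp_map]
    have key2 : PP n ε π2 π2_iota z = mqK (tp (fun i => π2 (c i))) := by
      rw [← hzc, PP_mk, tp_map]
    have key3 : PP n ε π3 π3_iota z = mqK (tp (fun i => π3 (c i))) := by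
      rw [← hzc, PP_mk, tp_map]
    refine ⟨?_, ?_, ?_⟩
    · have h4 : PP n ε π1 π1_iota z ∈ {p | ∃ c ∈ dualZ C₁, p = mqK (tp c)} := by
        rw [hA1]; exact h3.1
      obtain ⟨c', hc', he⟩ := h4
      have h6 : (fun i => π1 (c i)) = c' :=
        ell_injective n ε (key1.symm.trans he)
      rw [h6]
      exact hc'
    · have h4 : PP n ε π2 π2_iota z ∈ {p | ∃ c ∈ dualZ C₂, p = mqK (tp c)} := by
        rw [hA2]; exact h3.2.1
      obtain ⟨c', hc', he⟩ := h4
      have h6 : (fun i => π2 (c i)) = c' :=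
        ell_injective n ε (key2.symm.trans he)
      rw [h6]
      exact hc'
    · have h4 : PP n ε π3 π3_iota z ∈ {p | ∃ c ∈ dualZ C₃, p = mqK (tp c)} := by
        rw [hA3]; exact h3.2.2
      obtain ⟨c', hc', he⟩ := h4
      have h6 : (fun i => π3 (c i)) = c' :=
        ell_injective n ε (key3.symm.trans he)
      rw [h6]
      exact hc'

end RsideP
end S13


/-- Let `C = (1+2v²)C₁ ⊕ (2v+2v²)C₂ ⊕ (v+2v²)C₃` be a cyclic (`ε = 1`)
resp. negacyclic (`ε = -1`) code of length `n` over `R`, where `fᵢ` is the generator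
polynomial of `Cᵢ` and `hᵢ = (xⁿ - ε)/fᵢ`. Then, in `R[x]/(xⁿ - ε)`,
`C^⊥ = ⟨(1+2v²)h₁* + (2v+2v²)h₂* + (v+2v²)h₃*⟩` where `hᵢ*` is the reciprocal
polynomial of `hᵢ`, and `|C^⊥| = 3^{deg f₁ + deg f₂ + deg f₃}`. -/
theorem statement13 (n : ℕ) [NeZero n] (ε : ZMod 3) (hε : ε = 1 ∨ ε = -1)
    (C : Submodule R3 (Fin n → R3))
    (C₁ C₂ C₃ : Submodule (ZMod 3) (Fin n → ZMod 3))
    (f₁ f₂ f₃ h₁ h₂ h₃ : Polynomial (ZMod 3))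
    (hg₁ : IsGenPolyZ n ε (C₁ : Set (Fin n → ZMod 3)) f₁)
    (hg₂ : IsGenPolyZ n ε (C₂ : Set (Fin n → ZMod 3)) f₂)
    (hg₃ : IsGenPolyZ n ε (C₃ : Set (Fin n → ZMod 3)) f₃)
    (hh₁ : f₁ * h₁ = Polynomial.X ^ n - Polynomial.C ε)
    (hh₂ : f₂ * h₂ = Polynomial.X ^ n - Polynomial.C ε)
    (hh₃ : f₃ * h₃ = Polynomial.X ^ n - Polynomial.C ε)
    (hC : (C : Set (Fin n → R3)) = tri (C₁ : Set (Fin n → ZMod 3)) C₂ C₃)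
    (hShift : consta (R3.iota ε) '' (C : Set (Fin n → R3)) = (C : Set (Fin n → R3))) :
    {p | ∃ c ∈ dualR C, p = mkR n (R3.iota ε) (toPolyR c)} =
      ↑(Ideal.span {mkR n (R3.iota ε)
        (Polynomial.C e1 * h₁.reverse.map R3.iota +
         Polynomial.C e2 * h₂.reverse.map R3.iota +
         Polynomial.C e3 * h₃.reverse.map R3.iota)}) ∧
    Nat.card (dualR C) = 3 ^ (f₁.natDegree + f₂.natDegree + f₃.natDegree) := by
  
  have haK : ε * ε = 1 := by rcases hε with rfl | rfl <;> decide
  have hA1 := S13.terA n ε haK C₁ f₁ h₁ hh₁ hg₁.2.2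
  have hA2 := S13.terA n ε haK C₂ f₂ h₂ hh₂ hg₂.2.2
  have hA3 := S13.terA n ε haK C₃ f₃ h₃ hh₃ hg₃.2.2
  have hB1 := S13.terB n ε haK C₁ f₁ h₁ hh₁ hg₁.2.2
  have hB2 := S13.terB n ε haK C₂ f₂ h₂ hh₂ hg₂.2.2
  have hB3 := S13.terB n ε haK C₃ f₃ h₃ hh₃ hg₃.2.2
  constructor
  · exact S13.part1 n ε C C₁ C₂ C₃ h₁.reverse h₂.reverse h₃.reverse hC hA1 hA2 hA3
  · rw [S13.part2 C C₁ C₂ C₃ hC, hB1, hB2, hB3, ← pow_add, ← pow_add]
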